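/- If X is exponentially distributed with unit mean and Y is Gamma distributed with shape parameter N (a positive integer) and unit scale, and X, Y are independent, then P(X/Y < s) = 1 - (1+s)^{-N} for all s ≥ 0. -/

import Mathlib

open MeasureTheory ProbabilityTheory Real

open Set in
lemma gamma_ae_pos {a : ℝ} : ∀ᵐ y ∂(gammaMeasure a 1), 0 < y := by
  rw [MeasureTheory.ae_iff]
  have hset : {y : ℝ | ¬ 0 < y} = Iic 0 := by ext y; simp
  rw [hset, gammaMeasure, withDensity_apply _ measurableSet_Iic]
  have h0 : ∀ᵐ (x : ℝ) ∂(volume.restrict (Iic 0)), gammaPDF a 1 x = 0 := by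
    have hne : ∀ᵐ (x : ℝ) ∂volume, x ≠ 0 := by
      rw [MeasureTheory.ae_iff]
      simpa using Real.volume_singleton (a := 0)
    filter_upwards [ae_restrict_of_ae hne, ae_restrict_mem measurableSet_Iic] with x hx hx'
    exact gammaPDF_of_neg (lt_of_le_of_ne hx' hx)
  rw [lintegral_congr_ae h0, lintegral_zero]

/-- Measure of `Iio t` under the exponential measure. -/
lemma expMeasure_Iio {r : ℝ} (hr : 0 < r) {t : ℝ} (ht : 0 ≤ t) :
    expMeasure r (Set.Iio t) = ENNReal.ofReal (1 - Real.exp (-(r * t))) := by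
  rw [expMeasure, gammaMeasure, withDensity_apply _ measurableSet_Iio]
  have : ∫⁻ y in Set.Iio t, gammaPDF 1 r y = ∫⁻ y in Set.Iic t, gammaPDF 1 r y :=
    setLIntegral_congr (MeasureTheory.Iio_ae_eq_Iic' (Real.volume_singleton))
  rw [this]
  have := lintegral_exponentialPDF_eq_antiDeriv hr t
  simp only [if_pos ht] at this
  exact this

theorem ratio_cdf
    {Ω : Type*} [MeasureSpace Ω] (P : Measure Ω := volume) [IsProbabilityMeasure P]
    (X Y : Ω → ℝ) (N : ℕ) (hN : 0 < N)
    (hX : Measure.map X P = expMeasure 1)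
    (hY : Measure.map Y P = gammaMeasure N 1)
    (hindep : IndepFun X Y P)
    (s : ℝ) (hs : 0 ≤ s) :
    (P {ω | X ω / Y ω < s}).toReal = 1 - (1 + s) ^ (-(N : ℝ)) := by
  have hNR : (0 : ℝ) < (N : ℝ) := by exact_mod_cast hN
  have h1s : (0 : ℝ) < 1 + s := by linarith
  haveI hPexp : IsProbabilityMeasure (expMeasure 1) := isProbabilityMeasure_expMeasure one_pos
  haveI hPgam : IsProbabilityMeasure (gammaMeasure N 1) := isProbabilityMeasure_gammaMeasure hNR one_pos
  -- measurability of X, Y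
  have hXm : AEMeasurable X P := by
    by_contra h
    rw [Measure.map_of_not_aemeasurable h] at hX
    have := hPexp.measure_univ
    rw [← hX] at this
    simp at this
  have hYm : AEMeasurable Y P := by
    by_contra h
    rw [Measure.map_of_not_aemeasurable h] at hY
    have := hPgam.measure_univ
    rw [← hY] at this
    simp at this
  -- joint law
  have hmap : Measure.map (fun ω => (Y ω, X ω)) P = (gammaMeasure N 1).prod (expMeasure 1) := by
    rw [← hY, ← hX]
    exact (indepFun_iff_map_prod_eq_prod_map_map hYm hXm).mp hindep.symm
  have hSmeas : MeasurableSet {p : ℝ × ℝ | p.2 / p.1 < s} :=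
    measurableSet_lt (measurable_snd.div measurable_fst) measurable_const
  have hP : P {ω | X ω / Y ω < s}
      = ((gammaMeasure N 1).prod (expMeasure 1)) {p : ℝ × ℝ | p.2 / p.1 < s} := by
    rw [← hmap, Measure.map_apply_of_aemeasurable (hYm.prodMk hXm) hSmeas]
    rfl
  rw [hP, Measure.prod_apply hSmeas]
  -- compute inner measure a.e.
  have hinner : ∫⁻ y, expMeasure 1 (Prod.mk y ⁻¹' {p : ℝ × ℝ | p.2 / p.1 < s}) ∂(gammaMeasure N 1)
      = ∫⁻ y, ENNReal.ofReal (1 - Real.exp (-(s * y))) ∂(gammaMeasure N 1) := by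
    refine lintegral_congr_ae ?_
    filter_upwards [gamma_ae_pos] with y hy
    have hset : (Prod.mk y ⁻¹' {p : ℝ × ℝ | p.2 / p.1 < s}) = Set.Iio (s * y) := by
      ext x
      simp [Set.mem_Iio, div_lt_iff₀ hy, mul_comm]
    rw [hset, expMeasure_Iio one_pos (by positivity), one_mul]
  rw [hinner]
  -- split the integral
  have hsplit : ∫⁻ y, ENNReal.ofReal (1 - Real.exp (-(s * y))) ∂(gammaMeasure N 1)
      = 1 - ∫⁻ y, ENNReal.ofReal (Real.exp (-(s * y))) ∂(gammaMeasure N 1) := by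
    have hexp_meas : Measurable fun y : ℝ => ENNReal.ofReal (Real.exp (-(s * y))) :=
      ((measurable_const.mul measurable_id).neg.exp).ennreal_ofReal
    have heq : ∀ᵐ y ∂(gammaMeasure N 1),
        ENNReal.ofReal (1 - Real.exp (-(s * y)))
          = 1 - ENNReal.ofReal (Real.exp (-(s * y))) := by
      filter_upwards [gamma_ae_pos] with y hy
      rw [ENNReal.ofReal_sub _ (Real.exp_nonneg _), ENNReal.ofReal_one]
    have hb : ∀ᵐ y ∂(gammaMeasure N 1), ENNReal.ofReal (Real.exp (-(s * y))) ≤ 1 := by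
      filter_upwards [gamma_ae_pos] with y hy
      calc ENNReal.ofReal (Real.exp (-(s * y))) ≤ ENNReal.ofReal 1 :=
            ENNReal.ofReal_le_ofReal (Real.exp_le_one_iff.mpr (neg_nonpos.mpr (by positivity)))
        _ = 1 := ENNReal.ofReal_one
    have hfin : ∫⁻ y, ENNReal.ofReal (Real.exp (-(s * y))) ∂(gammaMeasure N 1) ≠ ⊤ := by
      refine ne_of_lt (lt_of_le_of_lt (lintegral_mono_ae hb) ?_)
      rw [lintegral_one, measure_univ]
      exact ENNReal.one_lt_top
    rw [lintegral_congr_ae heq, lintegral_sub hexp_meas hfin hb, lintegral_one, measure_univ]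
  rw [hsplit]
  -- compute the Laplace-transform integral
  have hI : ∫⁻ y, ENNReal.ofReal (Real.exp (-(s * y))) ∂(gammaMeasure N 1)
      = ENNReal.ofReal ((1 + s) ^ (-(N : ℝ))) := by
    have hm2 : Measurable fun y : ℝ => ENNReal.ofReal (Real.exp (-(s * y))) := by
      fun_prop
    have hm1 : Measurable (gammaPDF (N : ℝ) 1) := (measurable_gammaPDFReal _ _).ennreal_ofReal
    rw [gammaMeasure, lintegral_withDensity_eq_lintegral_mul _ hm1 hm2]
    have hpt : ∀ y : ℝ, (gammaPDF N 1 y * ENNReal.ofReal (Real.exp (-(s * y))))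
        = ENNReal.ofReal ((1 + s) ^ (-(N : ℝ))) * gammaPDF (N : ℝ) (1 + s) y := by
      intro y
      rcases lt_or_ge y 0 with hy | hy
      · rw [gammaPDF_of_neg hy, gammaPDF_of_neg hy, zero_mul, mul_zero]
      · rw [gammaPDF_of_nonneg hy, gammaPDF_of_nonneg hy,
          ← ENNReal.ofReal_mul (by positivity), ← ENNReal.ofReal_mul (by positivity)]
        congr 1
        rw [Real.one_rpow]
        rw [show (1 + s) ^ (-(N : ℝ)) * ((1 + s) ^ (N : ℝ) / Real.Gamma N * y ^ ((N : ℝ) - 1)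
              * Real.exp (-((1 + s) * y)))
            = ((1 + s) ^ (-(N : ℝ)) * (1 + s) ^ (N : ℝ)) / Real.Gamma N * y ^ ((N : ℝ) - 1)
              * Real.exp (-((1 + s) * y)) by ring]
        rw [← Real.rpow_add h1s, neg_add_cancel, Real.rpow_zero]
        rw [show -((1 + s) * y) = -(1 * y) + -(s * y) by ring, Real.exp_add]
        ring
    simp only [Pi.mul_apply]
    simp_rw [hpt]
    have hm3 : Measurable (gammaPDF (N : ℝ) (1 + s)) := (measurable_gammaPDFReal _ _).ennreal_ofReal
    rw [lintegral_const_mul _ hm3, lintegral_gammaPDF_eq_one hNR h1s, mul_one]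
  rw [hI]
  have hle1 : ENNReal.ofReal ((1 + s) ^ (-(N : ℝ))) ≤ 1 :=
    ENNReal.ofReal_one ▸ ENNReal.ofReal_le_ofReal
      (Real.rpow_le_one_of_one_le_of_nonpos (by linarith) (by linarith))
  rw [ENNReal.toReal_sub_of_le hle1 ENNReal.one_ne_top, ENNReal.toReal_one,
    ENNReal.toReal_ofReal (by positivity)]
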